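/- Components for K > 1/4: for every real number K > 1/4, the set {p ∈ ℝ² : h_{0,K}(p) = 1 and det(Hess h_{0,K})(p) < 0} has exactly 4 connected components, and these components are pairwise equivalent: for any two of them C and C′ there exists A ∈ GL(2,ℝ) with h_{0,K}(A·v) = h_{0,K}(v) for all v ∈ ℝ² and A(C) = C′. -/

import Mathlib

/-!
Common definitions: the quartic polynomial `hLK L K (x,y) = x⁴ − x²y² + L·x·y³ + K·y⁴` on ℝ²,
the Hessian determinant of a function on ℝ², and the curve `Hcurve L K = H_{L,K}`,
the connected component containing (1,0) of the hyperbolic points on the level set {h = 1}.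
-/

noncomputable section
open Matrix

/-- `h_{L,K}(x,y) = x⁴ − x²y² + L·x·y³ + K·y⁴`. -/
def hLK (L K : ℝ) (v : Fin 2 → ℝ) : ℝ :=
  v 0 ^ 4 - v 0 ^ 2 * v 1 ^ 2 + L * v 0 * v 1 ^ 3 + K * v 1 ^ 4

/-- Determinant of the Hessian matrix of `f : ℝ² → ℝ` at `p`. -/
def hessDet2 (f : (Fin 2 → ℝ) → ℝ) (p : Fin 2 → ℝ) : ℝ :=
  Matrix.det (Matrix.of fun i j : Fin 2 =>
    iteratedFDeriv ℝ 2 f p ![Pi.single i 1, Pi.single j 1])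

/-- `H_{L,K}`: the connected component containing `(1,0)` of
`{p ∈ ℝ² : h_{L,K}(p) = 1 and p is a hyperbolic point of h_{L,K}}`. -/
def Hcurve (L K : ℝ) : Set (Fin 2 → ℝ) :=
  connectedComponentIn {p | hLK L K p = 1 ∧ hessDet2 (hLK L K) p < 0} ![1, 0]

/-- The hyperbolic level set of `h_{0,K}`. -/
def hypLevelSet (K : ℝ) : Set (Fin 2 → ℝ) :=
  {p | hLK 0 K p = 1 ∧ hessDet2 (hLK 0 K) p < 0}

/-- The set of connected components of the hyperbolic level set of `h_{0,K}`. -/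
def hypComponents (K : ℝ) : Set (Set (Fin 2 → ℝ)) :=
  {C | ∃ p ∈ hypLevelSet K, C = connectedComponentIn (hypLevelSet K) p}

namespace CKQ

variable (K : ℝ)

/-! ### Derivative computations -/

lemma hasF (p : Fin 2 → ℝ) :
    HasFDerivAt (fun v => hLK 0 K v)
      ((4*p 0^3 - 2*p 0*p 1^2) • ContinuousLinearMap.proj 0
        + (4*K*p 1^3 - 2*p 0^2*p 1) • ContinuousLinearMap.proj 1 :
        (Fin 2 → ℝ) →L[ℝ] ℝ) p := by
  have h0 : HasFDerivAt (fun v : Fin 2 → ℝ => v 0)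
      (ContinuousLinearMap.proj 0 : (Fin 2 → ℝ) →L[ℝ] ℝ) p :=
    (ContinuousLinearMap.proj 0 : (Fin 2 → ℝ) →L[ℝ] ℝ).hasFDerivAt
  have h1 : HasFDerivAt (fun v : Fin 2 → ℝ => v 1)
      (ContinuousLinearMap.proj 1 : (Fin 2 → ℝ) →L[ℝ] ℝ) p :=
    (ContinuousLinearMap.proj 1 : (Fin 2 → ℝ) →L[ℝ] ℝ).hasFDerivAt
  have := ((((h0.mul h0).mul (h0.mul h0)).sub ((h0.mul h0).mul (h1.mul h1))).add
      ((((h1.mul h1).mul (h1.mul h1))).const_mul K))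
  convert this using 1
  all_goals try rfl
  · ext v; simp [hLK]; ring
  · ext v
    simp
    ring

lemma fderiv_f_apply (p w : Fin 2 → ℝ) :
    fderiv ℝ (hLK 0 K) p w
      = (4*p 0^3 - 2*p 0*p 1^2) * w 0 + (4*K*p 1^3 - 2*p 0^2*p 1) * w 1 := by
  rw [(hasF K p).fderiv]; simp

lemma diff_fderiv (p : Fin 2 → ℝ) :
    DifferentiableAt ℝ (fderiv ℝ (hLK 0 K)) p := by
  have : (fderiv ℝ (hLK 0 K)) = fun q : Fin 2 → ℝ =>
      ((4*q 0^3 - 2*q 0*q 1^2) • ContinuousLinearMap.proj 0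
        + (4*K*q 1^3 - 2*q 0^2*q 1) • ContinuousLinearMap.proj 1 :
        (Fin 2 → ℝ) →L[ℝ] ℝ) := funext fun q => (hasF K q).fderiv
  rw [this]
  have d0 : DifferentiableAt ℝ (fun v : Fin 2 → ℝ => v 0) p :=
    (ContinuousLinearMap.proj 0 : (Fin 2 → ℝ) →L[ℝ] ℝ).differentiableAt
  have d1 : DifferentiableAt ℝ (fun v : Fin 2 → ℝ => v 1) p :=
    (ContinuousLinearMap.proj 1 : (Fin 2 → ℝ) →L[ℝ] ℝ).differentiableAt
  fun_prop

lemma hasF2 (w : Fin 2 → ℝ) (p : Fin 2 → ℝ) :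
    HasFDerivAt (fun q => fderiv ℝ (hLK 0 K) q w)
      ((12*p 0^2*w 0 - 2*p 1^2*w 0 - 4*p 0*p 1*w 1) • ContinuousLinearMap.proj 0
        + ((-4)*p 0*p 1*w 0 + 12*K*p 1^2*w 1 - 2*p 0^2*w 1) • ContinuousLinearMap.proj 1 :
        (Fin 2 → ℝ) →L[ℝ] ℝ) p := by
  have e : (fun q => fderiv ℝ (hLK 0 K) q w) = fun q : Fin 2 → ℝ =>
      (4*q 0^3 - 2*q 0*q 1^2) * w 0 + (4*K*q 1^3 - 2*q 0^2*q 1) * w 1 :=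
    funext fun q => fderiv_f_apply K q w
  rw [e]
  have h0 : HasFDerivAt (fun v : Fin 2 → ℝ => v 0)
      (ContinuousLinearMap.proj 0 : (Fin 2 → ℝ) →L[ℝ] ℝ) p :=
    (ContinuousLinearMap.proj 0 : (Fin 2 → ℝ) →L[ℝ] ℝ).hasFDerivAt
  have h1 : HasFDerivAt (fun v : Fin 2 → ℝ => v 1)
      (ContinuousLinearMap.proj 1 : (Fin 2 → ℝ) →L[ℝ] ℝ) p :=
    (ContinuousLinearMap.proj 1 : (Fin 2 → ℝ) →L[ℝ] ℝ).hasFDerivAt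
  have := ((((((h0.mul h0).mul h0).const_mul (4:ℝ)).sub
      (((h0.mul h1).mul h1).const_mul (2:ℝ))).mul_const (w 0)).add
      (((((h1.mul h1).mul h1).const_mul (4*K)).sub
      (((h0.mul h0).mul h1).const_mul (2:ℝ))).mul_const (w 1)))
  convert this using 1
  all_goals try rfl
  · ext q; simp only [Pi.add_apply, Pi.sub_apply, Pi.mul_apply, Pi.pow_apply]; ring
  · ext v; simp; ring

lemma iterated_two (p v w : Fin 2 → ℝ) :
    iteratedFDeriv ℝ 2 (hLK 0 K) p ![v, w]
      = (12*p 0^2*w 0 - 2*p 1^2*w 0 - 4*p 0*p 1*w 1) * v 0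
        + ((-4)*p 0*p 1*w 0 + 12*K*p 1^2*w 1 - 2*p 0^2*w 1) * v 1 := by
  rw [iteratedFDeriv_two_apply]
  have hc := (diff_fderiv K p).hasFDerivAt
  have hcomp := (ContinuousLinearMap.apply ℝ ℝ w).hasFDerivAt.comp p hc
  have : fderiv ℝ (fun q => fderiv ℝ (hLK 0 K) q w) p =
      (ContinuousLinearMap.apply ℝ ℝ w).comp (fderiv ℝ (fderiv ℝ (hLK 0 K)) p) := by
    rw [← hc.fderiv] at hcomp ⊢
    exact hcomp.fderiv
  have h2 := (hasF2 K w p).fderiv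
  rw [this] at h2
  have := congrArg (fun (T : (Fin 2 → ℝ) →L[ℝ] ℝ) => T v) h2
  simp only [ContinuousLinearMap.comp_apply, ContinuousLinearMap.apply_apply] at this
  show fderiv ℝ (fderiv ℝ (hLK 0 K)) p (![v,w] 0) (![v,w] 1) = _
  simp only [Matrix.cons_val_zero, Matrix.cons_val_one, Matrix.head_cons]
  rw [this]
  simp

lemma hess_eq (p : Fin 2 → ℝ) :
    hessDet2 (hLK 0 K) p = -24*p 0^4 + (144*K - 12)*p 0^2*p 1^2 - 24*K*p 1^4 := by
  rw [hessDet2, Matrix.det_fin_two]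
  simp only [Matrix.of_apply, iterated_two]
  have s00 : (Pi.single 0 1 : Fin 2 → ℝ) 0 = 1 := rfl
  have s01 : (Pi.single 0 1 : Fin 2 → ℝ) 1 = 0 := rfl
  have s10 : (Pi.single 1 1 : Fin 2 → ℝ) 0 = 0 := rfl
  have s11 : (Pi.single 1 1 : Fin 2 → ℝ) 1 = 1 := rfl
  rw [s00, s01, s10, s11]
  ring


/-! ### Constants -/

def r1 : ℝ := ((12*K-1) - Real.sqrt (144*K^2 - 40*K + 1))/4
def r2 : ℝ := ((12*K-1) + Real.sqrt (144*K^2 - 40*K + 1))/4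

variable {K}
variable (hK : 1/4 < K)
include hK

lemma hKpos : 0 < K := by linarith

lemma hDpos : (0:ℝ) < 144*K^2 - 40*K + 1 := by nlinarith [sq_nonneg (4*K-1)]

lemma sqrtD_sq : Real.sqrt (144*K^2 - 40*K + 1) ^ 2 = 144*K^2 - 40*K + 1 :=
  Real.sq_sqrt (hDpos hK).le

lemma sqrtD_pos : 0 < Real.sqrt (144*K^2 - 40*K + 1) := Real.sqrt_pos.mpr (hDpos hK)

lemma hr1_pos : 0 < r1 K := by
  have h12 : (0:ℝ) < 12*K - 1 := by linarith
  have : Real.sqrt (144*K^2 - 40*K + 1) < 12*K - 1 :=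
    (Real.sqrt_lt' h12).mpr (by nlinarith)
  rw [r1]; linarith

lemma hr12 : r1 K < r2 K := by
  have := sqrtD_pos hK
  rw [r1, r2]; linarith

lemma hr2_pos : 0 < r2 K := lt_trans (hr1_pos hK) (hr12 hK)

lemma hsum : r1 K + r2 K = (12*K-1)/2 := by rw [r1, r2]; ring

lemma hprod : r1 K * r2 K = K := by
  have h := sqrtD_sq hK
  rw [r1, r2]
  nlinarith [h]

lemma hyp_iff (p : Fin 2 → ℝ) :
    hessDet2 (hLK 0 K) p < 0 ↔
      0 < (p 0^2 - r1 K*p 1^2) * (p 0^2 - r2 K*p 1^2) := by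
  rw [hess_eq]
  have key : -24*p 0^4 + (144*K - 12)*p 0^2*p 1^2 - 24*K*p 1^4
      = -24 * ((p 0^2 - r1 K*p 1^2) * (p 0^2 - r2 K*p 1^2)) := by
    have h1 := hsum hK
    have h2 := hprod hK
    linear_combination (-24*p 0^2*p 1^2) * h1 + (24*p 1^4) * h2
  rw [key]
  constructor <;> intro h <;> nlinarith

lemma mem_S_iff (p : Fin 2 → ℝ) :
    p ∈ hypLevelSet K ↔
      hLK 0 K p = 1 ∧ 0 < (p 0^2 - r1 K*p 1^2) * (p 0^2 - r2 K*p 1^2) := by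
  rw [hypLevelSet, Set.mem_setOf_eq, hyp_iff hK]

/-! ### The four open regions -/

variable (K) in
def U1 : Set (Fin 2 → ℝ) := {p | 0 < p 0 ∧ r2 K * p 1^2 < p 0^2}
variable (K) in
def U2 : Set (Fin 2 → ℝ) := {p | p 0 < 0 ∧ r2 K * p 1^2 < p 0^2}
variable (K) in
def U3 : Set (Fin 2 → ℝ) := {p | 0 < p 1 ∧ p 0^2 < r1 K * p 1^2}
variable (K) in
def U4 : Set (Fin 2 → ℝ) := {p | p 1 < 0 ∧ p 0^2 < r1 K * p 1^2}

omit hK in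
lemma isOpenU1 : IsOpen (U1 K) :=
  (isOpen_lt continuous_const (continuous_apply 0)).inter
    (isOpen_lt (continuous_const.mul ((continuous_apply 1).pow 2)) ((continuous_apply 0).pow 2))

omit hK in
lemma isOpenU2 : IsOpen (U2 K) :=
  (isOpen_lt (continuous_apply 0) continuous_const).inter
    (isOpen_lt (continuous_const.mul ((continuous_apply 1).pow 2)) ((continuous_apply 0).pow 2))

omit hK in
lemma isOpenU3 : IsOpen (U3 K) :=
  (isOpen_lt continuous_const (continuous_apply 1)).inter
    (isOpen_lt ((continuous_apply 0).pow 2) (continuous_const.mul ((continuous_apply 1).pow 2)))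

omit hK in
lemma isOpenU4 : IsOpen (U4 K) :=
  (isOpen_lt (continuous_apply 1) continuous_const).inter
    (isOpen_lt ((continuous_apply 0).pow 2) (continuous_const.mul ((continuous_apply 1).pow 2)))

lemma disjXY {p : Fin 2 → ℝ} (h2 : r2 K * p 1^2 < p 0^2) (h1 : p 0^2 < r1 K * p 1^2) : False := by
  have hr := hr12 hK
  nlinarith [sq_nonneg (p 1), sq_nonneg (p 0)]

lemma disj12 : Disjoint (U1 K) (U2 K) := by
  rw [Set.disjoint_left]; rintro p ⟨h1, -⟩ ⟨h2, -⟩; linarith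

lemma disj34 : Disjoint (U3 K) (U4 K) := by
  rw [Set.disjoint_left]; rintro p ⟨h1, -⟩ ⟨h2, -⟩; linarith

lemma disj13 : Disjoint (U1 K) (U3 K) := by
  rw [Set.disjoint_left]; rintro p ⟨-, h1⟩ ⟨-, h2⟩; exact disjXY hK h1 h2

lemma disj14 : Disjoint (U1 K) (U4 K) := by
  rw [Set.disjoint_left]; rintro p ⟨-, h1⟩ ⟨-, h2⟩; exact disjXY hK h1 h2

lemma disj23 : Disjoint (U2 K) (U3 K) := by
  rw [Set.disjoint_left]; rintro p ⟨-, h1⟩ ⟨-, h2⟩; exact disjXY hK h1 h2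

lemma disj24 : Disjoint (U2 K) (U4 K) := by
  rw [Set.disjoint_left]; rintro p ⟨-, h1⟩ ⟨-, h2⟩; exact disjXY hK h1 h2

lemma coverS : hypLevelSet K ⊆ U1 K ∪ U2 K ∪ U3 K ∪ U4 K := by
  intro p hp
  obtain ⟨-, hE⟩ := (mem_S_iff hK p).mp hp
  rcases mul_pos_iff.mp hE with ⟨ha, hb⟩ | ⟨ha, hb⟩
  · -- p 0 ^ 2 > r2 * p 1 ^ 2
    have h2 : r2 K * p 1^2 < p 0^2 := by linarith
    have hp0 : p 0 ≠ 0 := by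
      intro h0
      have : (0:ℝ) ≤ r2 K * p 1^2 := mul_nonneg (hr2_pos hK).le (sq_nonneg _)
      rw [h0] at h2; nlinarith
    rcases hp0.lt_or_gt with h | h
    · exact Or.inl (Or.inl (Or.inr ⟨h, h2⟩))
    · exact Or.inl (Or.inl (Or.inl ⟨h, h2⟩))
  · -- p 0 ^ 2 < r1 * p 1 ^ 2
    have h1 : p 0^2 < r1 K * p 1^2 := by linarith
    have hp1 : p 1 ≠ 0 := by
      intro h0
      rw [h0] at h1; nlinarith [sq_nonneg (p 0)]
    rcases hp1.lt_or_gt with h | h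
    · exact Or.inr ⟨h, h1⟩
    · exact Or.inl (Or.inr ⟨h, h1⟩)

/-! ### Parametrizations -/

variable (K) in
def gx (t : ℝ) : ℝ := K*t^4 - t^2 + 1
variable (K) in
def gy (s : ℝ) : ℝ := s^4 - s^2 + K
variable (K) in
def cx (t : ℝ) : ℝ := (Real.sqrt (Real.sqrt (gx K t)))⁻¹
variable (K) in
def cy (s : ℝ) : ℝ := (Real.sqrt (Real.sqrt (gy K s)))⁻¹

lemma gx_pos (t : ℝ) : 0 < gx K t := by
  rw [gx]; nlinarith [sq_nonneg (2*K*t^2 - 1), hKpos hK]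

lemma gy_pos (s : ℝ) : 0 < gy K s := by
  rw [gy]; nlinarith [sq_nonneg (s^2 - 1/2)]

lemma cx_pos (t : ℝ) : 0 < cx K t := by
  rw [cx]
  exact inv_pos.mpr (Real.sqrt_pos.mpr (Real.sqrt_pos.mpr (gx_pos hK t)))

lemma cy_pos (s : ℝ) : 0 < cy K s := by
  rw [cy]
  exact inv_pos.mpr (Real.sqrt_pos.mpr (Real.sqrt_pos.mpr (gy_pos hK s)))

lemma cx_pow (t : ℝ) : (cx K t)^4 * gx K t = 1 := by
  rw [cx]
  have h1 : (0:ℝ) ≤ gx K t := (gx_pos hK t).le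
  have h2 : (0:ℝ) ≤ Real.sqrt (gx K t) := Real.sqrt_nonneg _
  have key : (Real.sqrt (Real.sqrt (gx K t)))^4 = gx K t := by
    have : (Real.sqrt (Real.sqrt (gx K t)))^4
        = ((Real.sqrt (Real.sqrt (gx K t)))^2)^2 := by ring
    rw [this, Real.sq_sqrt h2, Real.sq_sqrt h1]
  rw [inv_pow, key]
  field_simp
  exact div_self (gx_pos hK t).ne'

lemma cy_pow (s : ℝ) : (cy K s)^4 * gy K s = 1 := by
  rw [cy]
  have h1 : (0:ℝ) ≤ gy K s := (gy_pos hK s).le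
  have h2 : (0:ℝ) ≤ Real.sqrt (gy K s) := Real.sqrt_nonneg _
  have key : (Real.sqrt (Real.sqrt (gy K s)))^4 = gy K s := by
    have : (Real.sqrt (Real.sqrt (gy K s)))^4
        = ((Real.sqrt (Real.sqrt (gy K s)))^2)^2 := by ring
    rw [this, Real.sq_sqrt h2, Real.sq_sqrt h1]
  rw [inv_pow, key]
  field_simp
  exact div_self (gy_pos hK s).ne'

omit hK in
lemma cont_cx (hK : 1/4 < K) : Continuous (cx K) := by
  apply Continuous.inv₀
  · exact (Real.continuous_sqrt.comp (Real.continuous_sqrt.comp (by unfold gx; fun_prop)))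
  · intro t
    exact (Real.sqrt_pos.mpr (Real.sqrt_pos.mpr (gx_pos hK t))).ne'

omit hK in
lemma cont_cy (hK : 1/4 < K) : Continuous (cy K) := by
  apply Continuous.inv₀
  · exact (Real.continuous_sqrt.comp (Real.continuous_sqrt.comp (by unfold gy; fun_prop)))
  · intro s
    exact (Real.sqrt_pos.mpr (Real.sqrt_pos.mpr (gy_pos hK s))).ne'

variable (K) in
/-- Parametrization of the component around `(1,0)` (sign `σ = ±1`). -/
def phiX (σ : ℝ) (t : ℝ) : Fin 2 → ℝ := ![σ * cx K t, σ * (t * cx K t)]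

variable (K) in
def phiY (σ : ℝ) (s : ℝ) : Fin 2 → ℝ := ![σ * (s * cy K s), σ * cy K s]

variable (K) in
def Ix : Set ℝ := {t | r2 K * t^2 < 1}
variable (K) in
def Iy : Set ℝ := {s | s^2 < r1 K}

lemma Ix_preconnected : IsPreconnected (Ix K) := by
  have h2 := hr2_pos hK
  have e : Ix K = Set.Ioo (-Real.sqrt ((r2 K)⁻¹)) (Real.sqrt ((r2 K)⁻¹)) := by
    ext t
    simp only [Ix, Set.mem_setOf_eq, Set.mem_Ioo]
    rw [← abs_lt, Real.lt_sqrt (abs_nonneg t), sq_abs]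
    constructor <;> intro h <;>
      nlinarith [mul_inv_cancel₀ h2.ne', inv_pos.mpr h2, sq_nonneg t]
  rw [e]; exact isPreconnected_Ioo

lemma Iy_preconnected : IsPreconnected (Iy K) := by
  have e : Iy K = Set.Ioo (-Real.sqrt (r1 K)) (Real.sqrt (r1 K)) := by
    ext s
    simp only [Iy, Set.mem_setOf_eq, Set.mem_Ioo]
    rw [← abs_lt, Real.lt_sqrt (abs_nonneg s), sq_abs]
  rw [e]; exact isPreconnected_Ioo

omit hK in
lemma vec_eq (p : Fin 2 → ℝ) (a b : ℝ) (h0 : a = p 0) (h1 : b = p 1) :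
    (![a, b] : Fin 2 → ℝ) = p := by
  funext i; fin_cases i <;> simpa

lemma image1 : hypLevelSet K ∩ U1 K = phiX K 1 '' Ix K := by
  ext p
  constructor
  · rintro ⟨hS, hp0, hp2⟩
    obtain ⟨hh, -⟩ := (mem_S_iff hK p).mp hS
    set t := p 1 / p 0 with hts
    have hp0' : p 0 ≠ 0 := ne_of_gt hp0
    have htI : t ∈ Ix K := by
      have e : r2 K * t^2 = (r2 K * p 1^2)/p 0^2 := by
        rw [hts, div_pow]; ring
      rw [Ix, Set.mem_setOf_eq, e, div_lt_one (pow_pos hp0 2)]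
      exact hp2
    refine ⟨t, htI, ?_⟩
    have hgx : gx K t = ((p 0)⁻¹)^4 := by
      rw [gx, hts]
      rw [hLK] at hh
      field_simp
      linear_combination hh
    have hcx : cx K t = p 0 := by
      rw [cx, hgx]
      have e1 : ((p 0)⁻¹)^4 = (((p 0)⁻¹)^2)^2 := by ring
      rw [e1, Real.sqrt_sq (sq_nonneg _), Real.sqrt_sq (by positivity),
        inv_inv]
    rw [phiX]
    apply vec_eq
    · rw [hcx, one_mul]
    · rw [hcx, one_mul, hts, div_mul_cancel₀ _ hp0']
  · rintro ⟨t, ht, rfl⟩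
    rw [Ix, Set.mem_setOf_eq] at ht
    have hc := cx_pos hK t
    have hc4 : (cx K t)^4 * (K*t^4 - t^2 + 1) = 1 := by
      have := cx_pow hK t; rwa [gx] at this
    have ht1 : r1 K * t^2 < 1 := by
      nlinarith [hr12 hK, sq_nonneg t]
    set c := cx K t
    have e0 : phiX K 1 t 0 = c := by simp [phiX, c]
    have e1 : phiX K 1 t 1 = t * c := by simp [phiX, c]
    refine ⟨(mem_S_iff hK _).mpr ⟨?_, ?_⟩, ?_, ?_⟩
    · rw [hLK, e0, e1]; linear_combination hc4
    · rw [e0, e1]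
      have e : (c^2 - r1 K*(t*c)^2) * (c^2 - r2 K*(t*c)^2)
          = c^4 * ((1 - r1 K*t^2) * (1 - r2 K*t^2)) := by ring
      rw [e]
      have h1 : 0 < 1 - r1 K*t^2 := by linarith
      have h2 : 0 < 1 - r2 K*t^2 := by linarith
      positivity
    · rw [e0]; exact hc
    · rw [e0, e1]
      nlinarith [pow_pos hc 2]

lemma image2 : hypLevelSet K ∩ U2 K = phiX K (-1) '' Ix K := by
  ext p
  constructor
  · rintro ⟨hS, hp0, hp2⟩
    obtain ⟨hh, -⟩ := (mem_S_iff hK p).mp hS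
    set t := p 1 / p 0 with hts
    have hp0' : p 0 ≠ 0 := ne_of_lt hp0
    have htI : t ∈ Ix K := by
      have e : r2 K * t^2 = (r2 K * p 1^2)/p 0^2 := by
        rw [hts, div_pow]; ring
      rw [Ix, Set.mem_setOf_eq, e, div_lt_one (by positivity)]
      exact hp2
    refine ⟨t, htI, ?_⟩
    have hgx : gx K t = ((p 0)⁻¹)^4 := by
      rw [gx, hts]
      rw [hLK] at hh
      field_simp
      linear_combination hh
    have hcx : cx K t = -(p 0) := by
      rw [cx, hgx]
      have e1 : ((p 0)⁻¹)^4 = (((p 0)⁻¹)^2)^2 := by ring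
      rw [e1, Real.sqrt_sq (sq_nonneg _), Real.sqrt_sq_eq_abs, abs_inv, inv_inv,
        abs_of_neg hp0]
    rw [phiX]
    apply vec_eq
    · rw [hcx]; ring
    · rw [hcx, hts]; field_simp
  · rintro ⟨t, ht, rfl⟩
    rw [Ix, Set.mem_setOf_eq] at ht
    have hc := cx_pos hK t
    have hc4 : (cx K t)^4 * (K*t^4 - t^2 + 1) = 1 := by
      have := cx_pow hK t; rwa [gx] at this
    have ht1 : r1 K * t^2 < 1 := by
      nlinarith [hr12 hK, sq_nonneg t]
    set c := cx K t
    have e0 : phiX K (-1) t 0 = -c := by simp [phiX, c]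
    have e1 : phiX K (-1) t 1 = -(t * c) := by simp [phiX, c]
    refine ⟨(mem_S_iff hK _).mpr ⟨?_, ?_⟩, ?_, ?_⟩
    · rw [hLK, e0, e1]; linear_combination hc4
    · rw [e0, e1]
      have e : ((-c)^2 - r1 K*(-(t*c))^2) * ((-c)^2 - r2 K*(-(t*c))^2)
          = c^4 * ((1 - r1 K*t^2) * (1 - r2 K*t^2)) := by ring
      rw [e]
      have h1 : 0 < 1 - r1 K*t^2 := by linarith
      have h2 : 0 < 1 - r2 K*t^2 := by linarith
      positivity
    · rw [e0]; linarith
    · rw [e0, e1]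
      nlinarith [pow_pos hc 2]

lemma image3 : hypLevelSet K ∩ U3 K = phiY K 1 '' Iy K := by
  ext p
  constructor
  · rintro ⟨hS, hp1, hp2⟩
    obtain ⟨hh, -⟩ := (mem_S_iff hK p).mp hS
    set s := p 0 / p 1 with hss
    have hp1' : p 1 ≠ 0 := ne_of_gt hp1
    have hsI : s ∈ Iy K := by
      have e : s^2 = p 0^2/p 1^2 := by rw [hss, div_pow]
      rw [Iy, Set.mem_setOf_eq, e, div_lt_iff₀ (by positivity)]
      linarith [hp2]
    refine ⟨s, hsI, ?_⟩
    have hgy : gy K s = ((p 1)⁻¹)^4 := by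
      rw [gy, hss]
      rw [hLK] at hh
      field_simp
      linear_combination hh
    have hcy : cy K s = p 1 := by
      rw [cy, hgy]
      have e1 : ((p 1)⁻¹)^4 = (((p 1)⁻¹)^2)^2 := by ring
      rw [e1, Real.sqrt_sq (sq_nonneg _), Real.sqrt_sq (by positivity), inv_inv]
    rw [phiY]
    apply vec_eq
    · rw [hcy, one_mul, hss, div_mul_cancel₀ _ hp1']
    · rw [hcy, one_mul]
  · rintro ⟨s, hs, rfl⟩
    rw [Iy, Set.mem_setOf_eq] at hs
    have hd := cy_pos hK s
    have hd4 : (cy K s)^4 * (s^4 - s^2 + K) = 1 := by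
      have := cy_pow hK s; rwa [gy] at this
    have hs2 : s^2 < r2 K := lt_trans hs (hr12 hK)
    set d := cy K s
    have e0 : phiY K 1 s 0 = s * d := by simp [phiY, d]
    have e1 : phiY K 1 s 1 = d := by simp [phiY, d]
    refine ⟨(mem_S_iff hK _).mpr ⟨?_, ?_⟩, ?_, ?_⟩
    · rw [hLK, e0, e1]; linear_combination hd4
    · rw [e0, e1]
      have e : ((s*d)^2 - r1 K*d^2) * ((s*d)^2 - r2 K*d^2)
          = d^4 * ((s^2 - r1 K) * (s^2 - r2 K)) := by ring
      rw [e]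
      exact mul_pos (pow_pos hd 4)
        (mul_pos_of_neg_of_neg (by linarith) (by linarith))
    · rw [e1]; exact hd
    · rw [e0, e1]
      nlinarith [pow_pos hd 2]

lemma image4 : hypLevelSet K ∩ U4 K = phiY K (-1) '' Iy K := by
  ext p
  constructor
  · rintro ⟨hS, hp1, hp2⟩
    obtain ⟨hh, -⟩ := (mem_S_iff hK p).mp hS
    set s := p 0 / p 1 with hss
    have hp1' : p 1 ≠ 0 := ne_of_lt hp1
    have hsI : s ∈ Iy K := by
      have e : s^2 = p 0^2/p 1^2 := by rw [hss, div_pow]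
      rw [Iy, Set.mem_setOf_eq, e, div_lt_iff₀ (by positivity)]
      linarith [hp2]
    refine ⟨s, hsI, ?_⟩
    have hgy : gy K s = ((p 1)⁻¹)^4 := by
      rw [gy, hss]
      rw [hLK] at hh
      field_simp
      linear_combination hh
    have hcy : cy K s = -(p 1) := by
      rw [cy, hgy]
      have e1 : ((p 1)⁻¹)^4 = (((p 1)⁻¹)^2)^2 := by ring
      rw [e1, Real.sqrt_sq (sq_nonneg _), Real.sqrt_sq_eq_abs, abs_inv, inv_inv,
        abs_of_neg hp1]
    rw [phiY]
    apply vec_eq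
    · rw [hcy, hss]; field_simp
    · rw [hcy]; ring
  · rintro ⟨s, hs, rfl⟩
    rw [Iy, Set.mem_setOf_eq] at hs
    have hd := cy_pos hK s
    have hd4 : (cy K s)^4 * (s^4 - s^2 + K) = 1 := by
      have := cy_pow hK s; rwa [gy] at this
    have hs2 : s^2 < r2 K := lt_trans hs (hr12 hK)
    set d := cy K s
    have e0 : phiY K (-1) s 0 = -(s * d) := by simp [phiY, d]
    have e1 : phiY K (-1) s 1 = -d := by simp [phiY, d]
    refine ⟨(mem_S_iff hK _).mpr ⟨?_, ?_⟩, ?_, ?_⟩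
    · rw [hLK, e0, e1]; linear_combination hd4
    · rw [e0, e1]
      have e : ((-(s*d))^2 - r1 K*(-d)^2) * ((-(s*d))^2 - r2 K*(-d)^2)
          = d^4 * ((s^2 - r1 K) * (s^2 - r2 K)) := by ring
      rw [e]
      exact mul_pos (pow_pos hd 4)
        (mul_pos_of_neg_of_neg (by linarith) (by linarith))
    · rw [e1]; linarith
    · rw [e0, e1]
      nlinarith [pow_pos hd 2]

/-! ### Connected components -/

omit hK in
lemma comp_eqgen {X : Type*} [TopologicalSpace X] {S U V : Set X} (hU : IsOpen U)
    (hV : IsOpen V) (hUV : Disjoint U V) (hcover : S ⊆ U ∪ V)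
    (hconn : IsPreconnected (S ∩ U)) {p : X} (hp : p ∈ S ∩ U) :
    connectedComponentIn S p = S ∩ U := by
  apply subset_antisymm
  · have hT : IsPreconnected (connectedComponentIn S p) := isPreconnected_connectedComponentIn
    have hTS : connectedComponentIn S p ⊆ S := connectedComponentIn_subset S p
    have hpT : p ∈ connectedComponentIn S p := mem_connectedComponentIn hp.1
    have hsub : connectedComponentIn S p ⊆ U :=
      hT.subset_left_of_subset_union hU hV hUV (hTS.trans hcover) ⟨p, hpT, hp.2⟩
    exact Set.subset_inter hTS hsub
  · exact hconn.subset_connectedComponentIn hp Set.inter_subset_left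

lemma conn1 : IsPreconnected (hypLevelSet K ∩ U1 K) := by
  rw [image1 hK]
  refine (Ix_preconnected hK).image _ (Continuous.continuousOn ?_)
  apply continuous_pi
  intro i
  fin_cases i
  · simp only [phiX, Matrix.cons_val_zero]
    exact continuous_const.mul (cont_cx hK)
  · simp only [phiX, Matrix.cons_val_one, Matrix.head_cons]
    exact continuous_const.mul (continuous_id.mul (cont_cx hK))

lemma conn2 : IsPreconnected (hypLevelSet K ∩ U2 K) := by
  rw [image2 hK]
  refine (Ix_preconnected hK).image _ (Continuous.continuousOn ?_)
  apply continuous_pi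
  intro i
  fin_cases i
  · simp only [phiX, Matrix.cons_val_zero]
    exact continuous_const.mul (cont_cx hK)
  · simp only [phiX, Matrix.cons_val_one, Matrix.head_cons]
    exact continuous_const.mul (continuous_id.mul (cont_cx hK))

lemma conn3 : IsPreconnected (hypLevelSet K ∩ U3 K) := by
  rw [image3 hK]
  refine (Iy_preconnected hK).image _ (Continuous.continuousOn ?_)
  apply continuous_pi
  intro i
  fin_cases i
  · simp only [phiY, Matrix.cons_val_zero]
    exact continuous_const.mul (continuous_id.mul (cont_cy hK))
  · simp only [phiY, Matrix.cons_val_one, Matrix.head_cons]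
    exact continuous_const.mul (cont_cy hK)

lemma conn4 : IsPreconnected (hypLevelSet K ∩ U4 K) := by
  rw [image4 hK]
  refine (Iy_preconnected hK).image _ (Continuous.continuousOn ?_)
  apply continuous_pi
  intro i
  fin_cases i
  · simp only [phiY, Matrix.cons_val_zero]
    exact continuous_const.mul (continuous_id.mul (cont_cy hK))
  · simp only [phiY, Matrix.cons_val_one, Matrix.head_cons]
    exact continuous_const.mul (cont_cy hK)

lemma comp1 {p : Fin 2 → ℝ} (hp : p ∈ hypLevelSet K ∩ U1 K) :
    connectedComponentIn (hypLevelSet K) p = hypLevelSet K ∩ U1 K := by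
  refine comp_eqgen (isOpenU1 (K := K)) (((isOpenU2 (K := K)).union (isOpenU3 (K := K))).union (isOpenU4 (K := K)))
    ?_ ?_ (conn1 hK) hp
  · refine Set.disjoint_union_right.mpr ⟨Set.disjoint_union_right.mpr ⟨?_, ?_⟩, ?_⟩
    exacts [disj12 hK, disj13 hK, disj14 hK]
  · intro x hx
    rcases coverS hK hx with ((h | h) | h) | h
    · exact Or.inl h
    · exact Or.inr (Or.inl (Or.inl h))
    · exact Or.inr (Or.inl (Or.inr h))
    · exact Or.inr (Or.inr h)

lemma comp2 {p : Fin 2 → ℝ} (hp : p ∈ hypLevelSet K ∩ U2 K) :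
    connectedComponentIn (hypLevelSet K) p = hypLevelSet K ∩ U2 K := by
  refine comp_eqgen (isOpenU2 (K := K)) (((isOpenU1 (K := K)).union (isOpenU3 (K := K))).union (isOpenU4 (K := K)))
    ?_ ?_ (conn2 hK) hp
  · refine Set.disjoint_union_right.mpr ⟨Set.disjoint_union_right.mpr ⟨?_, ?_⟩, ?_⟩
    exacts [(disj12 hK).symm, disj23 hK, disj24 hK]
  · intro x hx
    rcases coverS hK hx with ((h | h) | h) | h
    · exact Or.inr (Or.inl (Or.inl h))
    · exact Or.inl h
    · exact Or.inr (Or.inl (Or.inr h))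
    · exact Or.inr (Or.inr h)

lemma comp3 {p : Fin 2 → ℝ} (hp : p ∈ hypLevelSet K ∩ U3 K) :
    connectedComponentIn (hypLevelSet K) p = hypLevelSet K ∩ U3 K := by
  refine comp_eqgen (isOpenU3 (K := K)) (((isOpenU1 (K := K)).union (isOpenU2 (K := K))).union (isOpenU4 (K := K)))
    ?_ ?_ (conn3 hK) hp
  · refine Set.disjoint_union_right.mpr ⟨Set.disjoint_union_right.mpr ⟨?_, ?_⟩, ?_⟩
    exacts [(disj13 hK).symm, (disj23 hK).symm, disj34 hK]
  · intro x hx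
    rcases coverS hK hx with ((h | h) | h) | h
    · exact Or.inr (Or.inl (Or.inl h))
    · exact Or.inr (Or.inl (Or.inr h))
    · exact Or.inl h
    · exact Or.inr (Or.inr h)

lemma comp4 {p : Fin 2 → ℝ} (hp : p ∈ hypLevelSet K ∩ U4 K) :
    connectedComponentIn (hypLevelSet K) p = hypLevelSet K ∩ U4 K := by
  refine comp_eqgen (isOpenU4 (K := K)) (((isOpenU1 (K := K)).union (isOpenU2 (K := K))).union (isOpenU3 (K := K)))
    ?_ ?_ (conn4 hK) hp
  · refine Set.disjoint_union_right.mpr ⟨Set.disjoint_union_right.mpr ⟨?_, ?_⟩, ?_⟩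
    exacts [(disj14 hK).symm, (disj24 hK).symm, (disj34 hK).symm]
  · intro x hx
    rcases coverS hK hx with ((h | h) | h) | h
    · exact Or.inr (Or.inl (Or.inl h))
    · exact Or.inr (Or.inl (Or.inr h))
    · exact Or.inr (Or.inr h)
    · exact Or.inl h

/-! ### Base points -/

def pt1 : Fin 2 → ℝ := ![1, 0]
def pt2 : Fin 2 → ℝ := ![-1, 0]
variable (K) in
def pt3 : Fin 2 → ℝ := ![0, cy K 0]
variable (K) in
def pt4 : Fin 2 → ℝ := ![0, -(cy K 0)]

lemma cy0_pow : (cy K 0)^4 * K = 1 := by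
  have := cy_pow hK 0; rw [gy] at this; linarith [this]

lemma pt1_mem : pt1 ∈ hypLevelSet K ∩ U1 K := by
  refine ⟨(mem_S_iff hK _).mpr ⟨?_, ?_⟩, ?_, ?_⟩ <;>
    simp [pt1, hLK, U1] <;> norm_num

lemma pt2_mem : pt2 ∈ hypLevelSet K ∩ U2 K := by
  refine ⟨(mem_S_iff hK _).mpr ⟨?_, ?_⟩, ?_, ?_⟩ <;>
    simp [pt2, hLK, U2] <;> norm_num

lemma pt3_mem : pt3 K ∈ hypLevelSet K ∩ U3 K := by
  have hc := cy_pos hK 0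
  have hc4 := cy0_pow hK
  have h1 := hr1_pos hK
  have h2 := hr2_pos hK
  refine ⟨(mem_S_iff hK _).mpr ⟨?_, ?_⟩, ?_, ?_⟩
  · simp [pt3, hLK]; linear_combination hc4
  · simp only [pt3, Matrix.cons_val_zero, Matrix.cons_val_one, Matrix.head_cons]
    have e : ((0:ℝ)^2 - r1 K*(cy K 0)^2) * ((0:ℝ)^2 - r2 K*(cy K 0)^2)
        = (r1 K * r2 K) * (cy K 0)^4 := by ring
    rw [e]; positivity
  · simp only [pt3, U3, Set.mem_setOf_eq, Matrix.cons_val_one, Matrix.head_cons]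
    exact hc
  · simp only [pt3, Matrix.cons_val_zero, Matrix.cons_val_one, Matrix.head_cons]
    norm_num
    positivity

lemma pt4_mem : pt4 K ∈ hypLevelSet K ∩ U4 K := by
  have hc := cy_pos hK 0
  have hc4 := cy0_pow hK
  have h1 := hr1_pos hK
  have h2 := hr2_pos hK
  refine ⟨(mem_S_iff hK _).mpr ⟨?_, ?_⟩, ?_, ?_⟩
  · simp [pt4, hLK]; linear_combination hc4
  · simp only [pt4, Matrix.cons_val_zero, Matrix.cons_val_one, Matrix.head_cons]
    have e : ((0:ℝ)^2 - r1 K*(-(cy K 0))^2) * ((0:ℝ)^2 - r2 K*(-(cy K 0))^2)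
        = (r1 K * r2 K) * (cy K 0)^4 := by ring
    rw [e]; positivity
  · simp only [pt4, U4, Set.mem_setOf_eq, Matrix.cons_val_one, Matrix.head_cons,
      Matrix.cons_val_zero]
    linarith
  · simp only [pt4, Matrix.cons_val_zero, Matrix.cons_val_one, Matrix.head_cons]
    norm_num
    positivity

/-! ### The set of components -/

lemma comps_eq : hypComponents K =
    {hypLevelSet K ∩ U1 K, hypLevelSet K ∩ U2 K, hypLevelSet K ∩ U3 K,
      hypLevelSet K ∩ U4 K} := by
  ext C
  constructor
  · rintro ⟨p, hp, rfl⟩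
    rcases coverS hK hp with ((h | h) | h) | h
    · exact Or.inl (comp1 hK ⟨hp, h⟩)
    · exact Or.inr (Or.inl (comp2 hK ⟨hp, h⟩))
    · exact Or.inr (Or.inr (Or.inl (comp3 hK ⟨hp, h⟩)))
    · exact Or.inr (Or.inr (Or.inr (comp4 hK ⟨hp, h⟩)))
  · rintro (rfl | rfl | rfl | rfl)
    · exact ⟨pt1, (pt1_mem hK).1, (comp1 hK (pt1_mem hK)).symm⟩
    · exact ⟨pt2, (pt2_mem hK).1, (comp2 hK (pt2_mem hK)).symm⟩
    · exact ⟨pt3 K, (pt3_mem hK).1, (comp3 hK (pt3_mem hK)).symm⟩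
    · exact ⟨pt4 K, (pt4_mem hK).1, (comp4 hK (pt4_mem hK)).symm⟩

omit hK in
lemma ne_of_disj {X : Type*} {S U V : Set X} {p : X} (hUV : Disjoint U V)
    (hp : p ∈ S ∩ U) : S ∩ U ≠ S ∩ V := by
  intro h
  have hpV : p ∈ S ∩ V := h ▸ hp
  exact Set.disjoint_left.mp hUV hp.2 hpV.2

lemma ncard_comps : (hypComponents K).ncard = 4 := by
  rw [comps_eq hK]
  have h12 := ne_of_disj (disj12 hK) (pt1_mem hK)
  have h13 := ne_of_disj (disj13 hK) (pt1_mem hK)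
  have h14 := ne_of_disj (disj14 hK) (pt1_mem hK)
  have h23 := ne_of_disj (disj23 hK) (pt2_mem hK)
  have h24 := ne_of_disj (disj24 hK) (pt2_mem hK)
  have h34 := ne_of_disj (disj34 hK) (pt3_mem hK)
  rw [Set.ncard_insert_of_notMem (by simp [h12, h13, h14]),
    Set.ncard_insert_of_notMem (by simp [h23, h24]),
    Set.ncard_insert_of_notMem (by simp [h34]),
    Set.ncard_singleton]

/-! ### Symmetry matrices -/

variable (K) in
def aK : ℝ := Real.sqrt (Real.sqrt K)

lemma aK_pos : 0 < aK K :=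
  Real.sqrt_pos.mpr (Real.sqrt_pos.mpr (hKpos hK))

lemma aK_pow : (aK K)^4 = K := by
  rw [aK]
  have h1 : (0:ℝ) ≤ K := (hKpos hK).le
  have : (Real.sqrt (Real.sqrt K))^4 = ((Real.sqrt (Real.sqrt K))^2)^2 := by ring
  rw [this, Real.sq_sqrt (Real.sqrt_nonneg _), Real.sq_sqrt h1]

variable (K) in
def MM : Fin 4 → Matrix (Fin 2) (Fin 2) ℝ := fun i =>
  match i with
  | 0 => 1
  | 1 => -1
  | 2 => !![0, aK K; (aK K)⁻¹, 0]
  | 3 => !![0, aK K; -(aK K)⁻¹, 0]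

lemma MM_det_unit (i : Fin 4) : IsUnit (MM K i).det := by
  have ha := aK_pos hK
  have ha' : aK K ≠ 0 := ne_of_gt ha
  fin_cases i
  · simp [MM]
  · show IsUnit ((-1 : Matrix (Fin 2) (Fin 2) ℝ)).det
    rw [Matrix.det_neg]
    norm_num
  · simp only [MM, Matrix.det_fin_two_of]
    rw [isUnit_iff_ne_zero]
    intro h
    rw [zero_mul, zero_sub, neg_eq_zero, mul_inv_cancel₀ ha'] at h
    norm_num at h
  · simp only [MM, Matrix.det_fin_two_of]
    rw [isUnit_iff_ne_zero]
    intro h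
    rw [zero_mul, zero_sub, mul_neg, neg_eq_zero, mul_inv_cancel₀ ha'] at h
    norm_num at h

lemma MM_hinv (i : Fin 4) (v : Fin 2 → ℝ) :
    hLK 0 K ((MM K i).mulVec v) = hLK 0 K v := by
  have ha := aK_pos hK
  have ha' : aK K ≠ 0 := ne_of_gt ha
  have ha4 := aK_pow hK
  obtain ⟨a, ha0, ha4', hrw⟩ : ∃ a : ℝ, a ≠ 0 ∧ a^4 = K ∧ aK K = a :=
    ⟨aK K, ha', ha4, rfl⟩
  fin_cases i
  · simp [MM, Matrix.one_mulVec]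
  · show hLK 0 K ((-1 : Matrix (Fin 2) (Fin 2) ℝ).mulVec v) = hLK 0 K v
    rw [Matrix.neg_mulVec, Matrix.one_mulVec]
    simp [hLK]
    ring
  · simp only [MM, hLK, Matrix.mulVec, dotProduct, Fin.sum_univ_two,
      Matrix.of_apply, Matrix.cons_val', Matrix.cons_val_zero, Matrix.cons_val_one,
      Matrix.head_cons, Matrix.empty_val', Matrix.cons_val_fin_one, Matrix.head_fin_const]
    rw [hrw, ← ha4']
    field_simp
    ring
  · simp only [MM, hLK, Matrix.mulVec, dotProduct, Fin.sum_univ_two,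
      Matrix.of_apply, Matrix.cons_val', Matrix.cons_val_zero, Matrix.cons_val_one,
      Matrix.head_cons, Matrix.empty_val', Matrix.cons_val_fin_one, Matrix.head_fin_const]
    rw [hrw, ← ha4']
    field_simp
    ring

lemma MM_hessinv (i : Fin 4) (v : Fin 2 → ℝ) :
    hessDet2 (hLK 0 K) ((MM K i).mulVec v) = hessDet2 (hLK 0 K) v := by
  have ha := aK_pos hK
  have ha' : aK K ≠ 0 := ne_of_gt ha
  have ha4 := aK_pow hK
  obtain ⟨a, ha0, ha4', hrw⟩ : ∃ a : ℝ, a ≠ 0 ∧ a^4 = K ∧ aK K = a :=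
    ⟨aK K, ha', ha4, rfl⟩
  rw [hess_eq, hess_eq]
  fin_cases i
  · simp only [MM]
    rw [Matrix.one_mulVec]
  · simp only [MM]
    rw [Matrix.neg_mulVec, Matrix.one_mulVec]
    simp only [Pi.neg_apply]
    ring
  · simp only [MM, Matrix.mulVec, dotProduct, Fin.sum_univ_two,
      Matrix.of_apply, Matrix.cons_val', Matrix.cons_val_zero, Matrix.cons_val_one,
      Matrix.head_cons, Matrix.empty_val', Matrix.cons_val_fin_one, Matrix.head_fin_const]
    rw [hrw, ← ha4']
    field_simp
    ring
  · simp only [MM, Matrix.mulVec, dotProduct, Fin.sum_univ_two,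
      Matrix.of_apply, Matrix.cons_val', Matrix.cons_val_zero, Matrix.cons_val_one,
      Matrix.head_cons, Matrix.empty_val', Matrix.cons_val_fin_one, Matrix.head_fin_const]
    rw [hrw, ← ha4']
    field_simp
    ring

lemma MM_Sinv (i : Fin 4) (p : Fin 2 → ℝ) :
    (MM K i).mulVec p ∈ hypLevelSet K ↔ p ∈ hypLevelSet K := by
  rw [hypLevelSet, Set.mem_setOf_eq, Set.mem_setOf_eq, MM_hinv hK i p,
    MM_hessinv hK i p]

omit hK in
lemma sqrt_sqrt_pow4 (x : ℝ) (hx : 0 ≤ x) : Real.sqrt (Real.sqrt (x^4)) = x := by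
  rw [show x^4 = (x^2)^2 by ring, Real.sqrt_sq (sq_nonneg x), Real.sqrt_sq hx]

lemma aK_inv_eq_cy : (aK K)⁻¹ = cy K 0 := by
  have hc := cy_pos hK 0
  have hc4 := cy0_pow hK
  have ha := aK_pos hK
  have ha' : aK K ≠ 0 := ne_of_gt ha
  have hb : (0:ℝ) < (aK K)⁻¹ := by positivity
  have h4 : ((aK K)⁻¹)^4 = (cy K 0)^4 := by
    rw [inv_pow, aK_pow hK]
    field_simp
    linear_combination -hc4
  calc (aK K)⁻¹ = Real.sqrt (Real.sqrt (((aK K)⁻¹)^4)) :=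
        (sqrt_sqrt_pow4 _ hb.le).symm
    _ = Real.sqrt (Real.sqrt ((cy K 0)^4)) := by rw [h4]
    _ = cy K 0 := sqrt_sqrt_pow4 _ hc.le

lemma MM_pt (i : Fin 4) :
    (MM K i).mulVec pt1 = ![pt1, pt2, pt3 K, pt4 K] i := by
  have hac := aK_inv_eq_cy hK
  fin_cases i
  · show (1 : Matrix (Fin 2) (Fin 2) ℝ).mulVec pt1 = pt1
    rw [Matrix.one_mulVec]
  · show (-1 : Matrix (Fin 2) (Fin 2) ℝ).mulVec pt1 = pt2
    rw [Matrix.neg_mulVec, Matrix.one_mulVec]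
    funext j
    fin_cases j <;> simp [pt1, pt2]
  · show (!![0, aK K; (aK K)⁻¹, 0]).mulVec pt1 = pt3 K
    funext j
    fin_cases j <;>
      simp [pt1, pt3, Matrix.mulVec, dotProduct, Fin.sum_univ_two, hac]
  · show (!![0, aK K; -(aK K)⁻¹, 0]).mulVec pt1 = pt4 K
    funext j
    fin_cases j <;>
      simp [pt1, pt4, Matrix.mulVec, dotProduct, Fin.sum_univ_two, hac]

/-! ### Matrices act on components -/

omit hK in
def mvHomeo (M : Matrix (Fin 2) (Fin 2) ℝ) (hM : IsUnit M.det) :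
    (Fin 2 → ℝ) ≃ₜ (Fin 2 → ℝ) where
  toFun := M.mulVec
  invFun := M⁻¹.mulVec
  left_inv v := by
    rw [Matrix.mulVec_mulVec, Matrix.nonsing_inv_mul _ hM, Matrix.one_mulVec]
  right_inv v := by
    rw [Matrix.mulVec_mulVec, Matrix.mul_nonsing_inv _ hM, Matrix.one_mulVec]
  continuous_toFun := by
    have : Continuous (M.mulVecLin : (Fin 2 → ℝ) →ₗ[ℝ] (Fin 2 → ℝ)) :=
      LinearMap.continuous_of_finiteDimensional _
    simpa [Matrix.coe_mulVecLin] using this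
  continuous_invFun := by
    have : Continuous ((M⁻¹).mulVecLin : (Fin 2 → ℝ) →ₗ[ℝ] (Fin 2 → ℝ)) :=
      LinearMap.continuous_of_finiteDimensional _
    simpa [Matrix.coe_mulVecLin] using this

omit hK in
lemma image_comp (M : Matrix (Fin 2) (Fin 2) ℝ) (hM : IsUnit M.det)
    (hSinv : ∀ p, M.mulVec p ∈ hypLevelSet K ↔ p ∈ hypLevelSet K)
    {p : Fin 2 → ℝ} (hp : p ∈ hypLevelSet K) :
    M.mulVec '' connectedComponentIn (hypLevelSet K) p
      = connectedComponentIn (hypLevelSet K) (M.mulVec p) := by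
  have e := (mvHomeo M hM).image_connectedComponentIn (s := hypLevelSet K) (x := p) hp
  have him : (mvHomeo M hM) '' hypLevelSet K = hypLevelSet K := by
    ext q
    constructor
    · rintro ⟨r, hr, rfl⟩
      exact (hSinv r).mpr hr
    · intro hq
      have hq' : M⁻¹.mulVec q ∈ hypLevelSet K := by
        apply (hSinv _).mp
        rw [Matrix.mulVec_mulVec, Matrix.mul_nonsing_inv _ hM, Matrix.one_mulVec]
        exact hq
      refine ⟨M⁻¹.mulVec q, hq', ?_⟩
      show M.mulVec (M⁻¹.mulVec q) = q
      rw [Matrix.mulVec_mulVec, Matrix.mul_nonsing_inv _ hM, Matrix.one_mulVec]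
  rw [him] at e
  exact e

lemma MM_comp_image (i j : Fin 4) :
    (MM K j * (MM K i)⁻¹).mulVec ''
        connectedComponentIn (hypLevelSet K) (![pt1, pt2, pt3 K, pt4 K] i)
      = connectedComponentIn (hypLevelSet K) (![pt1, pt2, pt3 K, pt4 K] j) := by
  have hdi := MM_det_unit hK i
  have hdj := MM_det_unit hK j
  have hdi' : IsUnit (MM K i)⁻¹.det := by
    rw [Matrix.det_nonsing_inv]
    exact isUnit_ringInverse.mpr hdi
  have hdet : IsUnit (MM K j * (MM K i)⁻¹).det := by
    rw [Matrix.det_mul]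
    exact hdj.mul hdi'
  have hSinv_inv : ∀ p, (MM K i)⁻¹.mulVec p ∈ hypLevelSet K ↔ p ∈ hypLevelSet K := by
    intro p
    have := (MM_Sinv hK i ((MM K i)⁻¹.mulVec p)).symm
    rwa [Matrix.mulVec_mulVec, Matrix.mul_nonsing_inv _ hdi, Matrix.one_mulVec] at this
  have hSinv : ∀ p, (MM K j * (MM K i)⁻¹).mulVec p ∈ hypLevelSet K ↔ p ∈ hypLevelSet K := by
    intro p
    rw [← Matrix.mulVec_mulVec, MM_Sinv hK j, hSinv_inv]
  have hpt_i : (![pt1, pt2, pt3 K, pt4 K] i) ∈ hypLevelSet K := by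
    fin_cases i
    exacts [(pt1_mem hK).1, (pt2_mem hK).1, (pt3_mem hK).1, (pt4_mem hK).1]
  rw [image_comp (K := K) _ hdet hSinv hpt_i]
  congr 1
  rw [← MM_pt hK i, Matrix.mulVec_mulVec, Matrix.mul_assoc,
    Matrix.nonsing_inv_mul _ hdi, Matrix.mul_one, MM_pt hK j]

end CKQ

open CKQ in
/-- **Components for `K > 1/4`.**
For `K > 1/4`, the set `{h_{0,K} = 1} ∩ {hyperbolic points}` has exactly 4 connected
components, pairwise equivalent under linear automorphisms of `h_{0,K}`. -/
theorem components_K_gt_quarter (K : ℝ) (hK : 1/4 < K) :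
    (hypComponents K).ncard = 4 ∧
    ∀ C ∈ hypComponents K, ∀ C' ∈ hypComponents K,
      ∃ A : Matrix (Fin 2) (Fin 2) ℝ, IsUnit A ∧
        (∀ v : Fin 2 → ℝ, hLK 0 K (A.mulVec v) = hLK 0 K v) ∧
        A.mulVec '' C = C' := by
  refine ⟨ncard_comps hK, ?_⟩
  have key : ∀ D ∈ hypComponents K, ∃ i : Fin 4,
      D = connectedComponentIn (hypLevelSet K) (![pt1, pt2, pt3 K, pt4 K] i) := by
    intro D hD
    rw [comps_eq hK] at hD
    rcases hD with rfl | rfl | rfl | rfl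
    · exact ⟨0, (comp1 hK (pt1_mem hK)).symm⟩
    · exact ⟨1, (comp2 hK (pt2_mem hK)).symm⟩
    · exact ⟨2, (comp3 hK (pt3_mem hK)).symm⟩
    · exact ⟨3, (comp4 hK (pt4_mem hK)).symm⟩
  intro C hC C' hC'
  obtain ⟨i, rfl⟩ := key C hC
  obtain ⟨j, rfl⟩ := key C' hC'
  have hdi := MM_det_unit hK i
  have hdj := MM_det_unit hK j
  have hdi' : IsUnit (MM K i)⁻¹.det := by
    rw [Matrix.det_nonsing_inv]
    exact isUnit_ringInverse.mpr hdi
  have hdet : IsUnit (MM K j * (MM K i)⁻¹).det := by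
    rw [Matrix.det_mul]
    exact hdj.mul hdi'
  refine ⟨MM K j * (MM K i)⁻¹, (Matrix.isUnit_iff_isUnit_det _).mpr hdet, ?_,
    MM_comp_image hK i j⟩
  have hinv_inv : ∀ v, hLK 0 K ((MM K i)⁻¹.mulVec v) = hLK 0 K v := by
    intro v
    have := (MM_hinv hK i ((MM K i)⁻¹.mulVec v)).symm
    rwa [Matrix.mulVec_mulVec, Matrix.mul_nonsing_inv _ hdi, Matrix.one_mulVec] at this
  intro v
  rw [← Matrix.mulVec_mulVec, MM_hinv hK j, hinv_inv v]
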